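/- For i ∈ {1,…,5}, let Tᵢ(X) be the linear form in X₁,…,X₅ given by the determinant of the 4×4 matrix whose columns, indexed by j ∈ {1,…,5}∖{i} in increasing order, are (1, xⱼ, xⱼ², Xⱼ), and let a_{ij} ∈ ℂ[x₁,…,x₅] be the coefficient of Xⱼ in Tᵢ (so a_{ii} = 0). Then for all x₁,…,x₅ ∈ ℂ: a₃₁·a₄₂·(x₁−x₄)(x₂−x₃) = a₃₂·a₄₁·(x₁−x₃)(x₂−x₄). Equivalently, the cross ratio γ₅₆ = a₃₁a₄₂/(a₃₂a₄₁) associated to the tritangent plane t₅₆ equals (x₁−x₃)(x₂−x₄)/((x₁−x₄)(x₂−x₃)). -/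

import Mathlib

set_option maxHeartbeats 800000 in
/-- Explicit cofactor expansion of a 4×4 determinant. -/
private lemma det_fin_four' (A : Matrix (Fin 4) (Fin 4) ℂ) : A.det =
    A 0 0 * (A 1 1 * (A 2 2 * A 3 3 - A 2 3 * A 3 2) - A 1 2 * (A 2 1 * A 3 3 - A 2 3 * A 3 1)
      + A 1 3 * (A 2 1 * A 3 2 - A 2 2 * A 3 1))
  - A 0 1 * (A 1 0 * (A 2 2 * A 3 3 - A 2 3 * A 3 2) - A 1 2 * (A 2 0 * A 3 3 - A 2 3 * A 3 0)
      + A 1 3 * (A 2 0 * A 3 2 - A 2 2 * A 3 0))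
  + A 0 2 * (A 1 0 * (A 2 1 * A 3 3 - A 2 3 * A 3 1) - A 1 1 * (A 2 0 * A 3 3 - A 2 3 * A 3 0)
      + A 1 3 * (A 2 0 * A 3 1 - A 2 1 * A 3 0))
  - A 0 3 * (A 1 0 * (A 2 1 * A 3 2 - A 2 2 * A 3 1) - A 1 1 * (A 2 0 * A 3 2 - A 2 2 * A 3 0)
      + A 1 2 * (A 2 0 * A 3 1 - A 2 1 * A 3 0)) := by
  rw [Matrix.det_succ_row_zero]
  simp [Fin.sum_univ_succ, Matrix.det_fin_three, Matrix.submatrix_apply,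
    show (Fin.succ 2 : Fin 4) = 3 from rfl, show (Fin.succAbove 2 2 : Fin 4) = 3 from rfl,
    show (Fin.succAbove 3 2 : Fin 4) = 2 from rfl, show (Fin.succAbove 1 2 : Fin 4) = 3 from rfl,
    show (Fin.succAbove 0 2 : Fin 4) = 3 from rfl, show (Fin.castSucc 2 : Fin 4) = 2 from rfl]
  ring

/-- The linear form `Tᵢ(X)` defining the tritangent plane `t_{i6}`: the
determinant of the 4×4 matrix whose columns, indexed by `j ≠ i` in increasing
order (via `Fin.succAbove`), are `(1, xⱼ, xⱼ², Xⱼ)`. -/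
noncomputable def Tform (x : Fin 5 → ℂ) (i : Fin 5) (X : Fin 5 → ℂ) : ℂ :=
  Matrix.det (Matrix.of fun (r c : Fin 4) =>
    ![(1 : ℂ), x (i.succAbove c), x (i.succAbove c) ^ 2, X (i.succAbove c)] r)

set_option maxHeartbeats 1000000 in
/-- If `a i j` is the coefficient of `Xⱼ` in `Tᵢ`, then
`a₃₁a₄₂(x₁−x₄)(x₂−x₃) = a₃₂a₄₁(x₁−x₃)(x₂−x₄)`, i.e. the cross ratio
`γ₅₆ = a₃₁a₄₂/(a₃₂a₄₁)` equals `(x₁−x₃)(x₂−x₄)/((x₁−x₄)(x₂−x₃))`. -/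
theorem cross_ratio_gamma56 (x : Fin 5 → ℂ) (a : Fin 5 → Fin 5 → ℂ)
    (ha : ∀ (i : Fin 5) (X : Fin 5 → ℂ), Tform x i X = ∑ j, a i j * X j) :
    a 2 0 * a 3 1 * ((x 0 - x 3) * (x 1 - x 2)) =
      a 2 1 * a 3 0 * ((x 0 - x 2) * (x 1 - x 3)) := by
  have key : ∀ i j : Fin 5, a i j = Tform x i (Pi.single j 1) := by
    intro i j
    rw [ha i (Pi.single j 1)]
    simp [Pi.single_apply, mul_ite]
  have h20 := key 2 0
  have h21 := key 2 1
  have h30 := key 3 0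
  have h31 := key 3 1
  simp only [Tform, det_fin_four', Matrix.of_apply,
    Matrix.cons_val_zero, Matrix.cons_val_one, Matrix.head_cons,
    show ∀ (a b c d : ℂ), ![a,b,c,d] 2 = c from fun _ _ _ _ => rfl,
    show ∀ (a b c d : ℂ), ![a,b,c,d] 3 = d from fun _ _ _ _ => rfl,
    show (2:Fin 5).succAbove 0 = 0 from rfl, show (2:Fin 5).succAbove 1 = 1 from rfl,
    show (2:Fin 5).succAbove 2 = 3 from rfl, show (2:Fin 5).succAbove 3 = 4 from rfl,
    show (3:Fin 5).succAbove 0 = 0 from rfl, show (3:Fin 5).succAbove 1 = 1 from rfl,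
    show (3:Fin 5).succAbove 2 = 2 from rfl, show (3:Fin 5).succAbove 3 = 4 from rfl,
    show (Pi.single (0:Fin 5) (1:ℂ) : Fin 5 → ℂ) ((2:Fin 5).succAbove 0) = 1 from rfl,
    show (Pi.single (0:Fin 5) (1:ℂ) : Fin 5 → ℂ) ((2:Fin 5).succAbove 1) = 0 from rfl,
    show (Pi.single (0:Fin 5) (1:ℂ) : Fin 5 → ℂ) ((2:Fin 5).succAbove 2) = 0 from rfl,
    show (Pi.single (0:Fin 5) (1:ℂ) : Fin 5 → ℂ) ((2:Fin 5).succAbove 3) = 0 from rfl,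
    show (Pi.single (1:Fin 5) (1:ℂ) : Fin 5 → ℂ) ((2:Fin 5).succAbove 0) = 0 from rfl,
    show (Pi.single (1:Fin 5) (1:ℂ) : Fin 5 → ℂ) ((2:Fin 5).succAbove 1) = 1 from rfl,
    show (Pi.single (1:Fin 5) (1:ℂ) : Fin 5 → ℂ) ((2:Fin 5).succAbove 2) = 0 from rfl,
    show (Pi.single (1:Fin 5) (1:ℂ) : Fin 5 → ℂ) ((2:Fin 5).succAbove 3) = 0 from rfl,
    show (Pi.single (0:Fin 5) (1:ℂ) : Fin 5 → ℂ) ((3:Fin 5).succAbove 0) = 1 from rfl,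
    show (Pi.single (0:Fin 5) (1:ℂ) : Fin 5 → ℂ) ((3:Fin 5).succAbove 1) = 0 from rfl,
    show (Pi.single (0:Fin 5) (1:ℂ) : Fin 5 → ℂ) ((3:Fin 5).succAbove 2) = 0 from rfl,
    show (Pi.single (0:Fin 5) (1:ℂ) : Fin 5 → ℂ) ((3:Fin 5).succAbove 3) = 0 from rfl,
    show (Pi.single (1:Fin 5) (1:ℂ) : Fin 5 → ℂ) ((3:Fin 5).succAbove 0) = 0 from rfl,
    show (Pi.single (1:Fin 5) (1:ℂ) : Fin 5 → ℂ) ((3:Fin 5).succAbove 1) = 1 from rfl,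
    show (Pi.single (1:Fin 5) (1:ℂ) : Fin 5 → ℂ) ((3:Fin 5).succAbove 2) = 0 from rfl,
    show (Pi.single (1:Fin 5) (1:ℂ) : Fin 5 → ℂ) ((3:Fin 5).succAbove 3) = 0 from rfl]
    at h20 h21 h30 h31
  simp +decide [Pi.single_apply] at h20 h21 h30 h31
  rw [h20, h21, h30, h31]
  ring
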